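/- Let P be a finite saturated poset of height k ≥ 2 whose Hasse diagram is a tree, and suppose P is not a chain. Then there exists an element v of P that is a leaf of the Hasse diagram and an interval I of P with v ∈ I and |I| ≤ k-1 such that the Hasse diagram of P \ I is a tree and P \ I is a saturated poset of height k. -/

import Mathlib

/-- A finite poset has height `h` if `h` is the maximum number of elements of a chain. -/
def HasHeight (α : Type*) [Preorder α] (h : ℕ) : Prop :=
  (∃ c : Finset α, IsChain (· ≤ ·) (c : Set α) ∧ c.card = h) ∧
    ∀ c : Finset α, IsChain (· ≤ ·) (c : Set α) → c.card ≤ h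

/-- A maximal chain: a chain not properly contained in any other chain. -/
def IsMaxChainF {α : Type*} [Preorder α] (c : Finset α) : Prop :=
  IsChain (· ≤ ·) (c : Set α) ∧
    ∀ d : Finset α, IsChain (· ≤ ·) (d : Set α) → c ⊆ d → c = d

/-- A poset is saturated of height `h` if it has height `h` and every maximal chain has
exactly `h` elements. -/
def SaturatedOfHeight (α : Type*) [Preorder α] (h : ℕ) : Prop :=
  HasHeight α h ∧ ∀ c : Finset α, IsMaxChainF c → c.card = h

open SimpleGraph
section helpers

variable {β : Type} [Fintype β] [PartialOrder β]

lemma exists_maxChainF (c : Finset β) (hc : IsChain (· ≤ ·) (c : Set β)) :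
    ∃ d : Finset β, c ⊆ d ∧ IsMaxChainF d := by
  classical
  obtain ⟨d, hd, hmax⟩ := Finset.exists_max_image
      (Finset.univ.filter (fun d : Finset β => IsChain (· ≤ ·) (d : Set β) ∧ c ⊆ d))
      Finset.card ⟨c, by simp [hc]⟩
  simp only [Finset.mem_filter, Finset.mem_univ, true_and] at hd hmax
  exact ⟨d, hd.2, hd.1, fun e he hde =>
    (Finset.eq_of_subset_of_card_le hde (hmax e ⟨he, hd.2.trans hde⟩))⟩

lemma walk_of_le : ∀ a b : β, a ≤ b →
    ∃ p : (SimpleGraph.hasse β).Walk a b, p.IsPath ∧ ∀ z ∈ p.support, a ≤ z ∧ z ≤ b := by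
  have wf : WellFounded ((· > ·) : β → β → Prop) := (Finite.to_wellFoundedGT).wf
  intro a
  refine WellFounded.induction wf (C := fun a => ∀ b : β, a ≤ b →
    ∃ p : (SimpleGraph.hasse β).Walk a b, p.IsPath ∧ ∀ z ∈ p.support, a ≤ z ∧ z ≤ b) a ?_
  rintro x IH b hxb
  rcases hxb.lt_or_eq with hlt | rfl
  · obtain ⟨c, hxc, hcb⟩ := exists_covBy_le_of_lt hlt
    obtain ⟨p, hp, hsup⟩ := IH c hxc.lt b hcb
    refine ⟨SimpleGraph.Walk.cons (hasse_adj.2 (Or.inl hxc)) p, ?_, ?_⟩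
    · exact (SimpleGraph.Walk.cons_isPath_iff _ _).2
        ⟨hp, fun hmem => absurd (hsup x hmem).1 hxc.lt.not_ge⟩
    · intro z hz
      rw [SimpleGraph.Walk.support_cons, List.mem_cons] at hz
      rcases hz with rfl | hz
      · exact ⟨le_rfl, hxb⟩
      · exact ⟨hxc.le.trans (hsup z hz).1, (hsup z hz).2⟩
  · exact ⟨SimpleGraph.Walk.nil, by simp, by simp⟩

lemma chain_of_unique_up : ∀ a : β, (∀ x, a ≤ x → ∀ y z, x ⋖ y → x ⋖ z → y = z) →
    ∀ x y : β, a ≤ x → a ≤ y → x ≤ y ∨ y ≤ x := by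
  have wf : WellFounded ((· > ·) : β → β → Prop) := (Finite.to_wellFoundedGT).wf
  intro a
  refine WellFounded.induction wf (C := fun a => (∀ x, a ≤ x → ∀ y z, x ⋖ y → x ⋖ z → y = z) →
    ∀ x y : β, a ≤ x → a ≤ y → x ≤ y ∨ y ≤ x) a ?_
  rintro m IH h x y hmx hmy
  rcases hmx.lt_or_eq with hltx | rfl
  · rcases hmy.lt_or_eq with hlty | rfl
    · obtain ⟨c, hmc, hcx⟩ := exists_covBy_le_of_lt hltx
      obtain ⟨c', hmc', hcy⟩ := exists_covBy_le_of_lt hlty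
      obtain rfl : c = c' := h m le_rfl c c' hmc hmc'
      exact IH c hmc.lt (fun z hz => h z (hmc.le.trans hz)) x y hcx hcy
    · exact Or.inr hmx
  · exact Or.inl hmy

end helpers



section transfer

lemma sat_transfer {β γ : Type} [Preorder β] [Preorder γ] (e : β ≃ γ)
    (hcomp : ∀ a b : β, a ≤ b ∨ b ≤ a ↔ e a ≤ e b ∨ e b ≤ e a) {k : ℕ}
    (hs : SaturatedOfHeight β k) : SaturatedOfHeight γ k := by
  classical
  have himg : ∀ c : Finset β, IsChain (· ≤ ·) (c : Set β) →
      IsChain (· ≤ ·) ((c.image e : Finset γ) : Set γ) := by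
    intro c hc x hx y hy hxy
    simp only [Finset.coe_image, Set.mem_image, Finset.mem_coe] at hx hy
    obtain ⟨a, ha, rfl⟩ := hx; obtain ⟨b, hb, rfl⟩ := hy
    rcases eq_or_ne a b with rfl | hab
    · exact absurd rfl hxy
    · exact (hcomp a b).1 (hc ha hb hab)
  have hpre : ∀ c : Finset γ, IsChain (· ≤ ·) (c : Set γ) →
      IsChain (· ≤ ·) ((c.image e.symm : Finset β) : Set β) := by
    intro c hc x hx y hy hxy
    simp only [Finset.coe_image, Set.mem_image, Finset.mem_coe] at hx hy
    obtain ⟨a, ha, rfl⟩ := hx; obtain ⟨b, hb, rfl⟩ := hy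
    rcases eq_or_ne a b with rfl | hab
    · exact absurd rfl hxy
    · have := hcomp (e.symm a) (e.symm b)
      simp only [Equiv.apply_symm_apply] at this
      exact this.2 (hc ha hb hab)
  have cardimg : ∀ c : Finset β, (c.image e).card = c.card := fun c =>
    Finset.card_image_of_injective c e.injective
  have cardpre : ∀ c : Finset γ, (c.image e.symm).card = c.card := fun c =>
    Finset.card_image_of_injective c e.symm.injective
  obtain ⟨⟨⟨c₀, hc₀, hcard₀⟩, hbd⟩, hmax⟩ := hs
  refine ⟨⟨⟨c₀.image e, himg c₀ hc₀, by rw [cardimg, hcard₀]⟩, ?_⟩, ?_⟩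
  · intro c hc
    have := hbd (c.image e.symm) (hpre c hc)
    rwa [cardpre] at this
  · rintro c ⟨hc, hcm⟩
    have hbchain := hpre c hc
    have hbmax : IsMaxChainF (c.image e.symm) := by
      refine ⟨hbchain, fun d hd hsub => ?_⟩
      have hcd : c ⊆ d.image e := by
        intro x hx
        have : e.symm x ∈ c.image e.symm := Finset.mem_image_of_mem _ hx
        have := hsub this
        have := Finset.mem_image_of_mem e this
        simpa using this
      have hceq : c = d.image e := hcm (d.image e) (himg d hd) hcd
      rw [hceq, Finset.image_image]
      simp
    have := hmax _ hbmax
    rwa [cardpre] at this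
  
lemma isTree_of_iso {V W : Type} {G : SimpleGraph V} {H : SimpleGraph W} (e : G ≃g H)
    (h : G.IsTree) : H.IsTree := by
  refine ⟨e.connected_iff.1 h.isConnected, fun v c hc => ?_⟩
  have hinj : Function.Injective (e.symm.toHom : W → V) := e.symm.toEquiv.injective
  exact h.IsAcyclic _ ((SimpleGraph.Walk.map_isCycle_iff_of_injective (f := e.symm.toHom) hinj).2 hc)

lemma degree_of_iso {V W : Type} {G : SimpleGraph V} {H : SimpleGraph W} (e : G ≃g H)
    (v : V) [Fintype (G.neighborSet v)] [Fintype (H.neighborSet (e v))] :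
    H.degree (e v) = G.degree v := by
  rw [← SimpleGraph.card_neighborSet_eq_degree, ← SimpleGraph.card_neighborSet_eq_degree]
  exact (Fintype.card_congr (e.mapNeighborSet v)).symm

end transfer



open scoped Classical in
lemma main_up {β : Type} [Fintype β] [PartialOrder β] (k : ℕ) (hsat : SaturatedOfHeight β k)
    (htree : (hasse β).IsTree) (w u1 u2 : β) (h12 : u1 ≠ u2)
    (c1 : w ⋖ u1) (c2 : w ⋖ u2)
    (hclean : ∀ x, u1 ≤ x →
      (∀ a b, x ⋖ a → x ⋖ b → a = b) ∧ (∀ a b, a ⋖ x → b ⋖ x → a = b)) :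
    ∃ (v x y : β) (I : Set β), I = Set.Icc x y ∧ v ∈ I ∧
      (hasse β).degree v = 1 ∧ I.ncard ≤ k - 1 ∧
      (hasse ↥(Iᶜ)).IsTree ∧ SaturatedOfHeight ↥(Iᶜ) k := by
  classical
  set U : Set β := Set.Ici u1 with hU
  have hchainU : ∀ x ∈ U, ∀ y ∈ U, x ≤ y ∨ y ≤ x := fun x hx y hy =>
    chain_of_unique_up u1 (fun z hz => (hclean z hz).1) x y hx hy
  have hUfin : U.Finite := Set.toFinite U
  obtain ⟨v, hvU, hvmaxwrt⟩ := hUfin.exists_maximal ⟨u1, le_rfl⟩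
  have hvmax : ∀ x ∈ U, x ≤ v := by
    intro x hx
    rcases eq_or_ne x v with rfl | hne
    · exact le_rfl
    · rcases hchainU x hx v hvU with h | h
      · exact h
      · exact hvmaxwrt hx h
  have hwu1 : w < u1 := c1.lt
  have hwU : w ∉ U := fun h => absurd (lt_of_lt_of_le hwu1 h) (lt_irrefl w)
  have hu1v : u1 ≤ v := hvU
  have hup : ∀ i ∈ U, ∀ x : β, i < x → x ∈ U := fun i hi x hix => le_trans hi hix.le
  -- everything outside U that is below something in U is ≤ w
  have hdown : ∀ i : β, i ∈ U → ∀ x, x ∉ U → x < i → x ≤ w := by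
    have wf : WellFounded ((· < ·) : β → β → Prop) := (Finite.to_wellFoundedLT).wf
    intro i
    refine WellFounded.induction wf (C := fun i => i ∈ U → ∀ x, x ∉ U → x < i → x ≤ w) i ?_
    rintro i IH hiU x hxU hxi
    rcases eq_or_lt_of_le (hiU : u1 ≤ i) with rfl | hu1i
    · obtain ⟨c, hxc, hcu⟩ := exists_le_covBy_of_lt hxi
      have hc : c = w := (hclean u1 le_rfl).2 c w hcu c1
      rwa [hc] at hxc
    · obtain ⟨c, hxc, hci⟩ := exists_le_covBy_of_lt hxi
      obtain ⟨c', hu1c', hci'⟩ := exists_le_covBy_of_lt hu1i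
      obtain rfl : c = c' := (hclean i hiU).2 c c' hci hci'
      have hcU : c ∈ U := hu1c'
      rcases eq_or_lt_of_le hxc with rfl | hxc'
      · exact absurd hcU hxU
      · exact IH c hci.lt hcU x hxU hxc'
  have hbound : ∀ i, i ∈ U → ∀ x, x ∉ U → (hasse β).Adj i x → i = u1 ∧ x = w := by
    intro i hiU x hxU hadj
    rcases hadj with hix | hxi
    · exact absurd (hup i hiU x hix.lt) hxU
    · have hiu1 : i = u1 := by
        by_contra hne
        have hu1i : u1 < i := lt_of_le_of_ne hiU (Ne.symm hne)
        obtain ⟨c', hu1c', hci'⟩ := exists_le_covBy_of_lt hu1i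
        have hxc : x = c' := (hclean i hiU).2 x c' hxi hci'
        exact hxU (hxc ▸ hu1c')
      refine ⟨hiu1, (hclean u1 le_rfl).2 x w (hiu1 ▸ hxi) c1⟩
  have hu2U : u2 ∉ U := by
    intro h
    exact c2.2 hwu1 (lt_of_le_of_ne h h12)
  have hvtop : ∀ x, ¬v < x := fun x hx => absurd (hvmax x (hup v hvU x hx)) hx.not_ge
  have hwv : w < v := lt_of_lt_of_le hwu1 hu1v
  obtain ⟨cv, hwcv, hcvv⟩ := exists_le_covBy_of_lt hwv
  have hNv : (hasse β).neighborFinset v = {cv} := by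
    ext x
    rw [SimpleGraph.mem_neighborFinset, Finset.mem_singleton, hasse_adj]
    constructor
    · rintro (hvx | hxv)
      · exact absurd hvx.lt (hvtop x)
      · exact (hclean v hu1v).2 x cv hxv hcvv
    · rintro rfl; exact Or.inr hcvv
  have hdeg : (hasse β).degree v = 1 := by
    rw [← SimpleGraph.card_neighborFinset_eq_degree, hNv, Finset.card_singleton]
  -- cardinality
  have hcard : U.ncard ≤ k - 1 := by
    have hchain' : IsChain (· ≤ ·) ((insert w U.toFinset : Finset β) : Set β) := by
      intro x hx y hy hxy
      simp only [Finset.coe_insert, Set.mem_insert_iff, Finset.mem_coe, Set.mem_toFinset] at hx hy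
      rcases hx with rfl | hx
      · rcases hy with rfl | hy
        · exact absurd rfl hxy
        · exact Or.inl (le_trans hwu1.le hy)
      · rcases hy with rfl | hy
        · exact Or.inr (le_trans hwu1.le hx)
        · exact hchainU x hx y hy
    have hle := hsat.1.2 (insert w U.toFinset) hchain'
    rw [Finset.card_insert_of_notMem (by simp [hwU])] at hle
    have hn : U.ncard = U.toFinset.card := Set.ncard_eq_toFinset_card' U
    omega
  -- the complement
  have hwS : w ∈ Uᶜ := hwU
  have hcov : ∀ a b : ↥(Uᶜ), (a ⋖ b) ↔ ((a : β) ⋖ (b : β)) := by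
    intro a b
    constructor
    · rintro ⟨hlt, hmid⟩
      refine ⟨Subtype.coe_lt_coe.2 hlt, fun z haz hzb => ?_⟩
      have hzS : z ∈ Uᶜ := fun hzU => b.2 (hup z hzU b hzb)
      exact @hmid ⟨z, hzS⟩ (Subtype.coe_lt_coe.1 haz) (Subtype.coe_lt_coe.1 hzb)
    · rintro ⟨hlt, hmid⟩
      exact ⟨Subtype.coe_lt_coe.1 hlt, fun z haz hzb =>
        hmid (Subtype.coe_lt_coe.2 haz) (Subtype.coe_lt_coe.2 hzb)⟩
  have hadjS : ∀ a b : ↥(Uᶜ), (hasse ↥(Uᶜ)).Adj a b ↔ (hasse β).Adj (a : β) (b : β) := by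
    intro a b
    rw [hasse_adj, hasse_adj, hcov a b, hcov b a]
  let f : hasse ↥(Uᶜ) →g hasse β := ⟨Subtype.val, fun {a b} h => (hadjS a b).1 h⟩
  have hacyc : (hasse ↥(Uᶜ)).IsAcyclic := by
    intro x c hc
    exact htree.IsAcyclic _
      ((Walk.map_isCycle_iff_of_injective (f := f) Subtype.val_injective).2 hc)
  have hconnβ : (hasse β).Connected := htree.isConnected
  have hreach : ∀ n : ℕ, ∀ x : β, ∀ hx : x ∈ Uᶜ, (hasse β).dist x w ≤ n →
      (hasse ↥(Uᶜ)).Reachable ⟨x, hx⟩ ⟨w, hwS⟩ := by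
    intro n
    induction n with
    | zero =>
      intro x hx hd
      have hxw : x = w := (hconnβ.dist_eq_zero_iff).1 (Nat.le_zero.1 hd)
      subst hxw; exact Reachable.refl _
    | succ n IH =>
      intro x hx hd
      rcases eq_or_ne x w with rfl | hxw
      · exact Reachable.refl _
      · obtain ⟨p, hp⟩ := (hconnβ x w).exists_walk_length_eq_dist
        cases p with
        | nil => exact absurd rfl hxw
        | @cons _ x' _ h q =>
          have hdq : (hasse β).dist x' w ≤ n := by
            have h1 := SimpleGraph.dist_le q
            have h2 : q.length + 1 = (hasse β).dist x w := by
              simpa [SimpleGraph.Walk.length_cons] using hp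
            omega
          have hx'S : x' ∈ Uᶜ := by
            intro hx'U
            exact hxw (hbound x' hx'U x hx h.symm).2
          exact (SimpleGraph.Adj.reachable
            ((hadjS ⟨x, hx⟩ ⟨x', hx'S⟩).2 h)).trans (IH x' hx'S hdq)
  have hconnS : (hasse ↥(Uᶜ)).Connected := by
    rw [connected_iff_exists_forall_reachable]
    refine ⟨⟨w, hwS⟩, fun y => ?_⟩
    exact (hreach ((hasse β).dist (y : β) w) (y : β) y.2 le_rfl).symm
  -- chains in the subtype
  have hchain_val : ∀ c : Finset ↥(Uᶜ), IsChain (· ≤ ·) (c : Set ↥(Uᶜ)) →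
      IsChain (· ≤ ·) ((c.image Subtype.val : Finset β) : Set β) := by
    intro c hc x hx y hy hxy
    simp only [Finset.coe_image, Set.mem_image, Finset.mem_coe] at hx hy
    obtain ⟨a, ha, rfl⟩ := hx; obtain ⟨b, hb, rfl⟩ := hy
    have hab : a ≠ b := fun h => hxy (by rw [h])
    rcases hc ha hb hab with h | h
    · exact Or.inl h
    · exact Or.inr h
  have hliftchain : ∀ D : Finset β, (∀ y ∈ D, y ∈ Uᶜ) → IsChain (· ≤ ·) (D : Set β) →
      IsChain (· ≤ ·) ((D.subtype (· ∈ Uᶜ) : Finset ↥(Uᶜ)) : Set ↥(Uᶜ)) := by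
    intro D hDS hDc x hx y hy hxy
    have hx' : (x : β) ∈ D := by simpa using hx
    have hy' : (y : β) ∈ D := by simpa using hy
    have hne : (x : β) ≠ (y : β) := fun h => hxy (Subtype.coe_injective h)
    rcases hDc hx' hy' hne with h | h
    · exact Or.inl h
    · exact Or.inr h
  have hboundS : ∀ c : Finset ↥(Uᶜ), IsChain (· ≤ ·) (c : Set ↥(Uᶜ)) → c.card ≤ k := by
    intro c hc
    have := hsat.1.2 (c.image Subtype.val) (hchain_val c hc)
    rwa [Finset.card_image_of_injective _ Subtype.val_injective] at this
  -- height witness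
  have hwu2 : w < u2 := c2.lt
  have hchain_wu2 : IsChain (· ≤ ·) (({w, u2} : Finset β) : Set β) := by
    intro x hx y hy hxy
    simp only [Finset.coe_insert, Set.mem_insert_iff, Finset.coe_singleton,
      Set.mem_singleton_iff] at hx hy
    rcases hx with rfl | rfl <;> rcases hy with rfl | rfl
    · exact absurd rfl hxy
    · exact Or.inl hwu2.le
    · exact Or.inr hwu2.le
    · exact absurd rfl hxy
  obtain ⟨D₀, hD₀sub, hD₀chain, hD₀max⟩ := exists_maxChainF _ hchain_wu2
  have hD₀card : D₀.card = k := hsat.2 D₀ ⟨hD₀chain, hD₀max⟩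
  have hu2D₀ : u2 ∈ D₀ := hD₀sub (by simp)
  have hdisj : ∀ (D : Finset β), IsChain (· ≤ ·) (D : Set β) → u2 ∈ D → ∀ y ∈ D, y ∉ U := by
    intro D hDchain hu2D y hyD hyU
    rcases eq_or_ne y u2 with rfl | hne
    · exact hu2U hyU
    · rcases hDchain (Finset.mem_coe.2 hyD) (Finset.mem_coe.2 hu2D) hne with h | h
      · exact hu2U (le_trans hyU h)
      · have h2 : u2 ≤ w := hdown y hyU u2 hu2U (lt_of_le_of_ne h hne.symm)
        exact absurd (lt_of_lt_of_le hwu2 h2) (lt_irrefl w)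
  have hD₀disj := hdisj D₀ hD₀chain hu2D₀
  have hwit : ∃ c : Finset ↥(Uᶜ), IsChain (· ≤ ·) (c : Set ↥(Uᶜ)) ∧ c.card = k := by
    refine ⟨D₀.subtype (· ∈ Uᶜ), hliftchain D₀ hD₀disj hD₀chain, ?_⟩
    rw [Finset.card_subtype, show Finset.filter (fun x => x ∈ Uᶜ) D₀ = D₀ from Finset.filter_true_of_mem (fun y hy => hD₀disj y hy), hD₀card]
  -- maximal chains in the subtype
  have hsatmax : ∀ C : Finset ↥(Uᶜ), IsMaxChainF C → C.card = k := by
    rintro C ⟨hCchain, hCmax⟩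
    have hC'chain := hchain_val C hCchain
    obtain ⟨D, hsubD, hDc, hDm⟩ := exists_maxChainF _ hC'chain
    have hDcard : D.card = k := hsat.2 D ⟨hDc, hDm⟩
    by_cases hDU : ∃ y ∈ D, y ∈ U
    · obtain ⟨y, hyD, hyU⟩ := hDU
      have hCw : ∀ c : ↥(Uᶜ), c ∈ C → (c : β) ≤ w := by
        intro c hcC
        have hcD : (c : β) ∈ D := hsubD (Finset.mem_image_of_mem _ hcC)
        rcases eq_or_ne (c : β) y with heq | hne
        · exact absurd (heq ▸ hyU) c.2
        · rcases hDc (Finset.mem_coe.2 hcD) (Finset.mem_coe.2 hyD) hne with h | h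
          · exact hdown y hyU (c : β) c.2 (lt_of_le_of_ne h hne)
          · exact absurd (le_trans hyU h) c.2
      have hins : IsChain (· ≤ ·) ((insert ⟨u2, hu2U⟩ C : Finset ↥(Uᶜ)) : Set ↥(Uᶜ)) := by
        intro a ha b hb hab
        simp only [Finset.coe_insert, Set.mem_insert_iff, Finset.mem_coe] at ha hb
        rcases ha with rfl | ha
        · rcases hb with rfl | hb
          · exact absurd rfl hab
          · exact Or.inr (Subtype.coe_le_coe.1 (le_trans (hCw b hb) hwu2.le))
        · rcases hb with rfl | hb
          · exact Or.inl (Subtype.coe_le_coe.1 (le_trans (hCw a ha) hwu2.le))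
          · exact hCchain ha hb hab
      have hCeq := hCmax _ hins (Finset.subset_insert _ _)
      have hmem : (⟨u2, hu2U⟩ : ↥(Uᶜ)) ∈ C := hCeq ▸ Finset.mem_insert_self _ _
      exact absurd (lt_of_lt_of_le hwu2 (hCw _ hmem)) (lt_irrefl w)
    · push_neg at hDU
      have hCD' : C ⊆ D.subtype (· ∈ Uᶜ) := by
        intro c hc
        rw [Finset.mem_subtype]
        exact hsubD (Finset.mem_image_of_mem _ hc)
      have hCeq := hCmax _ (hliftchain D hDU hDc) hCD'
      rw [hCeq, Finset.card_subtype, show Finset.filter (fun x => x ∈ Uᶜ) D = D from Finset.filter_true_of_mem (fun y hy => hDU y hy), hDcard]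
  -- conclusion
  have hIcc : Set.Icc u1 v = U := by
    ext x
    simp only [Set.mem_Icc]
    exact ⟨fun h => h.1, fun h => ⟨h, hvmax x h⟩⟩
  refine ⟨v, u1, v, Set.Icc u1 v, rfl, ⟨hu1v, le_rfl⟩, hdeg, ?_, ?_, ?_⟩
  · rw [hIcc]; exact hcard
  · rw [hIcc]; exact ⟨hconnS, hacyc⟩
  · rw [hIcc]; exact ⟨⟨hwit, hboundS⟩, hsatmax⟩



lemma selection {α : Type} [Fintype α] [PartialOrder α]
    (htree : (hasse α).IsTree)
    (hnotchain : ¬ IsChain (· ≤ ·) (Set.univ : Set α)) :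
    (∃ w u1 u2 : α, u1 ≠ u2 ∧ w ⋖ u1 ∧ w ⋖ u2 ∧ ∀ x, u1 ≤ x →
       (∀ a b, x ⋖ a → x ⋖ b → a = b) ∧ (∀ a b, a ⋖ x → b ⋖ x → a = b)) ∨
    (∃ w u1 u2 : α, u1 ≠ u2 ∧ u1 ⋖ w ∧ u2 ⋖ w ∧ ∀ x, x ≤ u1 →
       (∀ a b, x ⋖ a → x ⋖ b → a = b) ∧ (∀ a b, a ⋖ x → b ⋖ x → a = b)) := by
  classical
  set G := hasse α with hG
  have hconn : G.Connected := htree.isConnected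
  have : Nonempty α := hconn.nonempty
  set B : Set α := {x | (∃ a b, x ⋖ a ∧ x ⋖ b ∧ a ≠ b) ∨ (∃ a b, a ⋖ x ∧ b ⋖ x ∧ a ≠ b)}
    with hBdef
  have hnotB : ∀ x, x ∉ B →
      (∀ a b, x ⋖ a → x ⋖ b → a = b) ∧ (∀ a b, a ⋖ x → b ⋖ x → a = b) := by
    intro x hx
    constructor
    · intro a b ha hb; by_contra hne; exact hx (Or.inl ⟨a, b, ha, hb, hne⟩)
    · intro a b ha hb; by_contra hne; exact hx (Or.inr ⟨a, b, ha, hb, hne⟩)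
  have hBne : B.Nonempty := by
    by_contra hB
    have hall : ∀ x, x ∉ B := fun x hx => hB ⟨x, hx⟩
    obtain ⟨m, -, hmmin⟩ := Finset.exists_minimal (s := (Finset.univ : Finset α))
      ⟨Classical.arbitrary α, Finset.mem_univ _⟩
    have hstep : ∀ x y : α, G.Adj x y → m ≤ x → m ≤ y := by
      intro x y hadj hmx
      rcases hadj with hxy | hyx
      · exact hmx.trans hxy.le
      · rcases eq_or_lt_of_le hmx with rfl | hmx'
        · exact absurd (hmmin (Finset.mem_univ y) hyx.lt.le) hyx.lt.not_ge
        · obtain ⟨c, hmc, hcx⟩ := exists_le_covBy_of_lt hmx'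
          have hy : y = c := (hnotB x (hall x)).2 y c hyx hcx
          exact hy ▸ hmc
    have hwalk : ∀ (x y : α) (p : G.Walk x y), m ≤ x → m ≤ y := by
      intro x y p
      induction p with
      | nil => exact id
      | cons h q IH => intro hx; exact IH (hstep _ _ h hx)
    have hallge : ∀ x : α, m ≤ x := fun x => hwalk m x (hconn m x).some le_rfl
    refine hnotchain fun x _ y _ hxy => ?_
    exact chain_of_unique_up m (fun z hz => (hnotB z (hall z)).1) x y (hallge x) (hallge y)
  obtain ⟨b₁, hb₁⟩ := hBne
  obtain ⟨pr, hprmem, hprmax⟩ := Finset.exists_max_image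
    ((Finset.univ.filter (· ∈ B)) ×ˢ (Finset.univ.filter (· ∈ B)))
    (fun pr => G.dist pr.1 pr.2)
    ⟨(b₁, b₁), by simp [hb₁]⟩
  obtain ⟨w, b0⟩ := pr
  simp only [Finset.mem_product, Finset.mem_filter, Finset.mem_univ, true_and] at hprmem
  obtain ⟨hwB, hb0B⟩ := hprmem
  have hmax : ∀ x y : α, x ∈ B → y ∈ B → G.dist x y ≤ G.dist w b0 := by
    intro x y hx hy
    exact hprmax (x, y) (by simp [hx, hy])
  -- "beyond u x" : x is reachable from u avoiding w
  have hKmain : ∀ u : α, ¬ (∃ p : G.Walk u b0, w ∉ p.support) →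
      ∀ x ∈ B, ¬ (∃ p : G.Walk u x, w ∉ p.support) := by
    rintro u hnb x hxB ⟨q, hq⟩
    have hxw : x ≠ w := by
      rintro rfl
      exact hq (Walk.end_mem_support q)
    have hwalkthru : ∀ p : G.Walk b0 x, w ∈ p.support := by
      intro p
      by_contra hw
      refine hnb ⟨q.append p.reverse, ?_⟩
      rw [Walk.mem_support_append_iff]
      push_neg
      exact ⟨hq, by rw [Walk.support_reverse]; simpa using hw⟩
    obtain ⟨p, hp⟩ := (hconn b0 x).exists_walk_length_eq_dist
    have hwp : w ∈ p.support := hwalkthru p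
    have hsplit : G.dist b0 x = (p.takeUntil w hwp).length + (p.dropUntil w hwp).length := by
      conv_lhs => rw [← hp, ← Walk.take_spec p hwp]
      rw [Walk.length_append]
    have h1 : G.dist b0 w ≤ (p.takeUntil w hwp).length := SimpleGraph.dist_le _
    have h2 : 0 < (p.dropUntil w hwp).length := by
      rcases Nat.eq_zero_or_pos (p.dropUntil w hwp).length with h0 | h0
      · exact absurd (Walk.eq_of_length_eq_zero h0).symm hxw
      · exact h0
    have hc1 : G.dist b0 x ≤ G.dist w b0 := hmax b0 x hb0B hxB
    have hc2 : G.dist w b0 = G.dist b0 w := SimpleGraph.dist_comm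
    omega
  have hKtwo : ∀ u1 u2 : α, u1 ≠ u2 → G.Adj w u1 → G.Adj w u2 →
      ¬ ((∃ p : G.Walk u1 b0, w ∉ p.support) ∧ (∃ p : G.Walk u2 b0, w ∉ p.support)) := by
    rintro u1 u2 hne h1 h2 ⟨⟨p1, hp1⟩, ⟨p2, hp2⟩⟩
    have hq0 : w ∉ (p1.append p2.reverse).support := by
      rw [Walk.mem_support_append_iff]
      push_neg
      exact ⟨hp1, by rw [Walk.support_reverse]; simpa using hp2⟩
    set q := (p1.append p2.reverse).bypass with hqdef
    have hqp : q.IsPath := Walk.bypass_isPath _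
    have hqw : w ∉ q.support := fun h => hq0 (Walk.support_bypass_subset _ h)
    have hcyc : (Walk.cons h1 (q.concat h2.symm)).IsCycle := by
      rw [Walk.cons_isCycle_iff]
      constructor
      · have hnd : (q.support ++ [w]).Nodup := by
          rw [List.nodup_append]
          exact ⟨(Walk.isPath_def q).1 hqp, List.nodup_singleton w, by
            simp [List.disjoint_singleton, hqw]; rintro a ha rfl; exact hqw ha⟩
        rw [Walk.isPath_def, Walk.support_concat]
        exact hnd
      · intro hmem
        rw [Walk.edges_concat, List.concat_eq_append, List.mem_append] at hmem
        rcases hmem with hmem | hmem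
        · exact hqw (Walk.fst_mem_support_of_mem_edges q hmem)
        · rw [List.mem_singleton, Sym2.eq_iff] at hmem
          rcases hmem with ⟨rfl, rfl⟩ | ⟨-, rfl⟩
          · exact G.irrefl h2
          · exact hne rfl
    exact htree.IsAcyclic _ hcyc
  have hbeyond_up : ∀ u x : α, w ⋖ u → u ≤ x → ∃ p : G.Walk u x, w ∉ p.support := by
    intro u x hcov hux
    obtain ⟨p, -, hsup⟩ := walk_of_le u x hux
    exact ⟨p, fun hmem => absurd (hsup w hmem).1 hcov.lt.not_ge⟩
  have hbeyond_dn : ∀ u x : α, u ⋖ w → x ≤ u → ∃ p : G.Walk u x, w ∉ p.support := by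
    intro u x hcov hxu
    obtain ⟨p, -, hsup⟩ := walk_of_le x u hxu
    refine ⟨p.reverse, fun hmem => ?_⟩
    rw [Walk.support_reverse, List.mem_reverse] at hmem
    exact absurd (hsup w hmem).2 hcov.lt.not_ge
  rcases hwB with ⟨u1, u2, hc1, hc2, hne⟩ | ⟨u1, u2, hc1, hc2, hne⟩
  · have hor : ¬ (∃ p : G.Walk u1 b0, w ∉ p.support) ∨
        ¬ (∃ p : G.Walk u2 b0, w ∉ p.support) := by
      rcases Classical.em (∃ p : G.Walk u1 b0, w ∉ p.support) with h | h
      · exact Or.inr fun h2 => hKtwo u1 u2 hne (Or.inl hc1) (Or.inl hc2) ⟨h, h2⟩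
      · exact Or.inl h
    rcases hor with h | h
    · refine Or.inl ⟨w, u1, u2, hne, hc1, hc2, fun x hux => ?_⟩
      exact hnotB x fun hxB => hKmain u1 h x hxB (hbeyond_up u1 x hc1 hux)
    · refine Or.inl ⟨w, u2, u1, hne.symm, hc2, hc1, fun x hux => ?_⟩
      exact hnotB x fun hxB => hKmain u2 h x hxB (hbeyond_up u2 x hc2 hux)
  · have hor : ¬ (∃ p : G.Walk u1 b0, w ∉ p.support) ∨
        ¬ (∃ p : G.Walk u2 b0, w ∉ p.support) := by
      rcases Classical.em (∃ p : G.Walk u1 b0, w ∉ p.support) with h | h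
      · exact Or.inr fun h2 => hKtwo u1 u2 hne (Or.inr hc1) (Or.inr hc2) ⟨h, h2⟩
      · exact Or.inl h
    rcases hor with h | h
    · refine Or.inr ⟨w, u1, u2, hne, hc1, hc2, fun x hux => ?_⟩
      exact hnotB x fun hxB => hKmain u1 h x hxB (hbeyond_dn u1 x hc1 hux)
    · refine Or.inr ⟨w, u2, u1, hne.symm, hc2, hc1, fun x hux => ?_⟩
      exact hnotB x fun hxB => hKmain u2 h x hxB (hbeyond_dn u2 x hc2 hux)




open scoped Classical in
/-- If `P` is a finite saturated poset of height `k ≥ 2` whose Hasse diagram is a tree and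
`P` is not a chain, then there is a leaf `v` of the Hasse diagram and an interval
`I = [x,y]` containing `v` with `|I| ≤ k-1` such that the Hasse diagram of `P \ I` is a
tree and `P \ I` is saturated of height `k`. -/
theorem stmt_4 (α : Type) [Fintype α] [PartialOrder α] (k : ℕ) (hk : 2 ≤ k)
    (hsat : SaturatedOfHeight α k) (htree : (SimpleGraph.hasse α).IsTree)
    (hnotchain : ¬ IsChain (· ≤ ·) (Set.univ : Set α)) :
    ∃ (v x y : α) (I : Set α), I = Set.Icc x y ∧ v ∈ I ∧
      (SimpleGraph.hasse α).degree v = 1 ∧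
      I.ncard ≤ k - 1 ∧
      (SimpleGraph.hasse ↥(Iᶜ)).IsTree ∧
      SaturatedOfHeight ↥(Iᶜ) k := by
  classical
  rcases selection htree hnotchain with ⟨w, u1, u2, hne, hc1, hc2, hcl⟩ |
      ⟨w, u1, u2, hne, hc1, hc2, hcl⟩
  · exact main_up k hsat htree w u1 u2 hne hc1 hc2 hcl
  · -- dual case
    have hsat' : SaturatedOfHeight αᵒᵈ k := by
      refine sat_transfer (OrderDual.toDual) (fun a b => ?_) hsat
      constructor
      · rintro (h | h)
        · exact Or.inr h
        · exact Or.inl h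
      · rintro (h | h)
        · exact Or.inr h
        · exact Or.inl h
    have htree' : (hasse αᵒᵈ).IsTree := isTree_of_iso hasseDualIso.symm htree
    have hc1' : (OrderDual.toDual w) ⋖ (OrderDual.toDual u1) := toDual_covBy_toDual_iff.2 hc1
    have hc2' : (OrderDual.toDual w) ⋖ (OrderDual.toDual u2) := toDual_covBy_toDual_iff.2 hc2
    have hne' : (OrderDual.toDual u1) ≠ (OrderDual.toDual u2) :=
      fun h => hne (OrderDual.toDual.injective h)
    have hcl' : ∀ x : αᵒᵈ, OrderDual.toDual u1 ≤ x →
        (∀ a b, x ⋖ a → x ⋖ b → a = b) ∧ (∀ a b, a ⋖ x → b ⋖ x → a = b) := by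
      intro x hx
      have hx' : OrderDual.ofDual x ≤ u1 := hx
      obtain ⟨h1, h2⟩ := hcl (OrderDual.ofDual x) hx'
      constructor
      · intro a b ha hb
        have ha' : OrderDual.ofDual a ⋖ OrderDual.ofDual x := toDual_covBy_toDual_iff.1 ha
        have hb' : OrderDual.ofDual b ⋖ OrderDual.ofDual x := toDual_covBy_toDual_iff.1 hb
        exact congrArg OrderDual.toDual (h2 _ _ ha' hb')
      · intro a b ha hb
        have ha' : OrderDual.ofDual x ⋖ OrderDual.ofDual a := toDual_covBy_toDual_iff.1 ha
        have hb' : OrderDual.ofDual x ⋖ OrderDual.ofDual b := toDual_covBy_toDual_iff.1 hb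
        exact congrArg OrderDual.toDual (h1 _ _ ha' hb')
    obtain ⟨v, x, y, I, hIcc, hvI, hdeg, hncard, htreeI, hsatI⟩ :=
      main_up k hsat' htree' (OrderDual.toDual w) (OrderDual.toDual u1) (OrderDual.toDual u2)
        hne' hc1' hc2' hcl'
    set J : Set α := (OrderDual.ofDual : αᵒᵈ → α) '' I with hJdef
    have hJ : ∀ a : α, a ∈ J ↔ OrderDual.toDual a ∈ I := by
      intro a
      constructor
      · rintro ⟨b, hb, rfl⟩; exact hb
      · intro h; exact ⟨OrderDual.toDual a, h, rfl⟩
    have hJIcc : J = Set.Icc (OrderDual.ofDual y) (OrderDual.ofDual x) := by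
      ext a
      rw [hJ a, hIcc, Set.mem_Icc, Set.mem_Icc]
      constructor
      · rintro ⟨h1, h2⟩; exact ⟨h2, h1⟩
      · rintro ⟨h1, h2⟩; exact ⟨h2, h1⟩
    have hvJ : OrderDual.ofDual v ∈ J := (hJ _).2 hvI
    have hdeg' : (hasse α).degree (OrderDual.ofDual v) = 1 := by
      have := degree_of_iso (hasseDualIso (α := α)) v
      rw [hasseDualIso_apply] at this
      rw [this]; exact hdeg
    have hncard' : J.ncard ≤ k - 1 := by
      rw [hJdef, Set.ncard_image_of_injective I (OrderDual.ofDual.injective)]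
      exact hncard
    -- subtype equivalence
    have hmemJI : ∀ a : α, a ∈ Jᶜ ↔ OrderDual.toDual a ∈ Iᶜ := fun a => not_congr (hJ a)
    set E : ↥(Jᶜ) ≃ ↥(Iᶜ) := (OrderDual.toDual : α ≃ αᵒᵈ).subtypeEquiv hmemJI with hEdef
    have hEval : ∀ a : ↥(Jᶜ), ((E a : αᵒᵈ)) = OrderDual.toDual (a : α) := fun a => rfl
    have hltJI : ∀ a b : ↥(Jᶜ), a < b ↔ E b < E a := by
      intro a b
      rw [← Subtype.coe_lt_coe, ← Subtype.coe_lt_coe, hEval, hEval]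
      exact Iff.rfl
    have hcovJI : ∀ a b : ↥(Jᶜ), a ⋖ b ↔ E b ⋖ E a := by
      intro a b
      constructor
      · rintro ⟨hlt, hmid⟩
        refine ⟨(hltJI a b).1 hlt, fun c h1 h2 => ?_⟩
        have hc : c = E (E.symm c) := (E.apply_symm_apply c).symm
        rw [hc] at h1 h2
        exact @hmid (E.symm c) ((hltJI _ _).2 h2) ((hltJI _ _).2 h1)
      · rintro ⟨hlt, hmid⟩
        refine ⟨(hltJI a b).2 hlt, fun c h1 h2 => ?_⟩
        exact @hmid (E c) ((hltJI _ _).1 h2) ((hltJI _ _).1 h1)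
    have hgiso : hasse ↥(Jᶜ) ≃g hasse ↥(Iᶜ) := by
      refine ⟨E, ?_⟩
      intro a b
      rw [hasse_adj, hasse_adj, ← hcovJI a b, ← hcovJI b a]
      exact or_comm
    refine ⟨OrderDual.ofDual v, OrderDual.ofDual y, OrderDual.ofDual x, J, hJIcc, hvJ, hdeg',
      hncard', isTree_of_iso hgiso.symm htreeI, ?_⟩
    refine sat_transfer E.symm (fun a b => ?_) hsatI
    constructor
    · rintro (h | h)
      · exact Or.inr (by rw [← Subtype.coe_le_coe] at h ⊢; exact h)
      · exact Or.inl (by rw [← Subtype.coe_le_coe] at h ⊢; exact h)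
    · rintro (h | h)
      · exact Or.inr (by rw [← Subtype.coe_le_coe] at h ⊢; exact h)
      · exact Or.inl (by rw [← Subtype.coe_le_coe] at h ⊢; exact h)
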